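/- arXiv:2202.11185 — 2 statements merged into one kernel-verified Lean document; each statement's English description precedes it below -/
import Mathlib

section
/- Let u, v ∈ S_n and fix 1 ≤ i < n. Then ∑_{p : i ∈ Des(p)} c_{u,v}^{p} · 𝔖_{p s_i}(1,…,1) = δ(v,i) · 𝔖_u(1,…,1) · 𝔖_{v s_i}(1,…,1) + δ(u,i) · 𝔖_{u s_i}(1,…,1) · 𝔖_v(1,…,1), where δ(w,i) is 1 if i is a descent of w and 0 otherwise, and the left-hand sum runs over permutations p with descent at position i. -/
open MvPolynomial

noncomputable section

/-- The simple transposition `sᵢ` swapping `i` and `i+1` (we use it for `i ≥ 1`). -/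
def simpT (i : ℕ) : Equiv.Perm ℕ := Equiv.swap i (i + 1)

/-- `w ∈ Sₙ`: the permutation `w` of the positive integers (with `0` as an artificial
fixed point) fixes `0` and every integer greater than `n`. -/
def IsPermOf (n : ℕ) (w : Equiv.Perm ℕ) : Prop := ∀ i, i = 0 ∨ n < i → w i = i

/-- `w ∈ S_∞`: `w` fixes `0` and all but finitely many positive integers. -/
def FinPerm (w : Equiv.Perm ℕ) : Prop := ∃ n, IsPermOf n w

/-- Coxeter length: the number of inversions. -/
def len (w : Equiv.Perm ℕ) : ℕ := Set.ncard {p : ℕ × ℕ | p.1 < p.2 ∧ w p.2 < w p.1}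

/-- The longest element of `Sₙ`, sending `i ↦ n+1-i` for `1 ≤ i ≤ n`. -/
def w0 (n : ℕ) : Equiv.Perm ℕ :=
  Function.Involutive.toPerm (fun i => if 1 ≤ i ∧ i ≤ n then n + 1 - i else i)
    (by intro i; dsimp only; split_ifs <;> omega)

/-- The staircase monomial `x₁^(n-1) x₂^(n-2) ⋯ xₙ^0`. -/
def staircase (n : ℕ) : MvPolynomial ℕ ℤ := ∏ i ∈ Finset.Icc 1 n, X i ^ (n - i)

/-- The action of `sᵢ` on polynomials, swapping the variables `xᵢ` and `x_{i+1}`. -/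
def swapVars (i : ℕ) (f : MvPolynomial ℕ ℤ) : MvPolynomial ℕ ℤ :=
  rename (Equiv.swap i (i + 1)) f

/-- The Newton divided difference operator `Nᵢ(f) = (f - sᵢ·f)/(xᵢ - x_{i+1})`.
(The numerator is always divisible by `xᵢ - x_{i+1}`, and the quotient is unique
since we are in an integral domain; we extract it by choice.) -/
def divDiff (i : ℕ) (f : MvPolynomial ℕ ℤ) : MvPolynomial ℕ ℤ :=
  open Classical in
  if h : ∃ g, f - swapVars i f = (X i - X (i + 1)) * g then h.choose else 0

open Classical in
/-- Fuel-based recursion computing the Schubert polynomial of `w ∈ Sₙ`: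
`𝔖_{w₀} = staircase n` and, if `i` is the least ascent of `w ≠ w₀`,
`𝔖_w = Nᵢ 𝔖_{w sᵢ}` (equivalently `𝔖_{w sᵢ} = Nᵢ 𝔖_w` when `w sᵢ < w`).
Fuel `n*n` always suffices. -/
def SchubAux : ℕ → ℕ → Equiv.Perm ℕ → MvPolynomial ℕ ℤ
  | 0, n, w => if w = w0 n then staircase n else 0
  | (fuel + 1), n, w =>
      if w = w0 n then staircase n
      else if h : ∃ i, 1 ≤ i ∧ i < n ∧ w i < w (i + 1) then
        divDiff (Nat.find h) (SchubAux fuel n (w * simpT (Nat.find h)))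
      else 0

/-- The Schubert polynomial of `w`, computed inside `Sₙ`. -/
def SchubertIn (n : ℕ) (w : Equiv.Perm ℕ) : MvPolynomial ℕ ℤ := SchubAux (n * n) n w

open Classical in
/-- The Schubert polynomial `𝔖_w` for `w ∈ S_∞` (and junk value `0` otherwise). -/
def Schubert (w : Equiv.Perm ℕ) : MvPolynomial ℕ ℤ :=
  if h : FinPerm w then SchubertIn (Nat.find h) w else 0

/-- The isobaric operator `N̄ᵢ(f) = Nᵢ((1 - x_{i+1}) f)` for Grothendieck polynomials. -/
def divDiffBar (i : ℕ) (f : MvPolynomial ℕ ℤ) : MvPolynomial ℕ ℤ :=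
  divDiff i ((1 - X (i + 1)) * f)

open Classical in
/-- Fuel-based recursion computing the Grothendieck polynomial of `w ∈ Sₙ`. -/
def GrothAux : ℕ → ℕ → Equiv.Perm ℕ → MvPolynomial ℕ ℤ
  | 0, n, w => if w = w0 n then staircase n else 0
  | (fuel + 1), n, w =>
      if w = w0 n then staircase n
      else if h : ∃ i, 1 ≤ i ∧ i < n ∧ w i < w (i + 1) then
        divDiffBar (Nat.find h) (GrothAux fuel n (w * simpT (Nat.find h)))
      else 0

open Classical in
/-- The Grothendieck polynomial `𝔊_w` for `w ∈ S_∞`. -/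
def Groth (w : Equiv.Perm ℕ) : MvPolynomial ℕ ℤ :=
  if h : FinPerm w then GrothAux (Nat.find h * Nat.find h) (Nat.find h) w else 0

/-- The β-isobaric operator `f ↦ Nᵢ((1 + β x_{i+1}) f)`, where the variable `x₀`
plays the role of `β`. -/
def divDiffBeta (i : ℕ) (f : MvPolynomial ℕ ℤ) : MvPolynomial ℕ ℤ :=
  divDiff i ((1 + X 0 * X (i + 1)) * f)

open Classical in
/-- Fuel-based recursion computing the β-Grothendieck polynomial of `w ∈ Sₙ`,
with the variable `x₀` playing the role of `β`.  This agrees with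
`𝔊_w^{(β)}(x) = (-β)^{-ℓ(w)} 𝔊_w(-βx)`. -/
def GrothBAux : ℕ → ℕ → Equiv.Perm ℕ → MvPolynomial ℕ ℤ
  | 0, n, w => if w = w0 n then staircase n else 0
  | (fuel + 1), n, w =>
      if w = w0 n then staircase n
      else if h : ∃ i, 1 ≤ i ∧ i < n ∧ w i < w (i + 1) then
        divDiffBeta (Nat.find h) (GrothBAux fuel n (w * simpT (Nat.find h)))
      else 0

open Classical in
/-- The β-Grothendieck polynomial `𝔊_w^{(β)}` for `w ∈ S_∞`, with `x₀` as `β`. -/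
def GrothB (w : Equiv.Perm ℕ) : MvPolynomial ℕ ℤ :=
  if h : FinPerm w then GrothBAux (Nat.find h * Nat.find h) (Nat.find h) w else 0

/-- The operator `∇ = ∑ᵢ ∂/∂xᵢ`. -/
def nabla (f : MvPolynomial ℕ ℤ) : MvPolynomial ℕ ℤ := ∑ᶠ i, pderiv i f

/-- The Euler operator `E = ∑ᵢ xᵢ ∂/∂xᵢ`. -/
def euler (f : MvPolynomial ℕ ℤ) : MvPolynomial ℕ ℤ := ∑ᶠ i, X i * pderiv i f

/-- The operator `∇^β = ∑_{i≥1} ∂/∂xᵢ + β² ∂/∂β` (with `x₀` playing the role of `β`). -/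
def nablaB (f : MvPolynomial ℕ ℤ) : MvPolynomial ℕ ℤ :=
  (∑ᶠ i ∈ {i : ℕ | 1 ≤ i}, pderiv i f) + X 0 ^ 2 * pderiv 0 f

/-- The descent set `Des(w) = {i ≥ 1 : w(i) > w(i+1)}`. -/
def Des (w : Equiv.Perm ℕ) : Set ℕ := {i | 1 ≤ i ∧ w (i + 1) < w i}

/-- The major index `maj(w) = ∑_{i ∈ Des(w)} i`. -/
def maj (w : Equiv.Perm ℕ) : ℕ := ∑ᶠ i ∈ Des w, i

/-- The embedding `w ↦ 1 × w` with `(1×w)(i) = w(i-1) + 1` for `i ≥ 1`. -/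
def oneTimes (w : Equiv.Perm ℕ) : Equiv.Perm ℕ where
  toFun i := if i = 0 then 0 else w (i - 1) + 1
  invFun i := if i = 0 then 0 else w⁻¹ (i - 1) + 1
  left_inv := by
    intro i
    cases i with
    | zero => simp
    | succ j => simp
  right_inv := by
    intro i
    cases i with
    | zero => simp
    | succ j => simp

/-- Evaluation of a polynomial with all variables set to `1`. -/
def evalOne (f : MvPolynomial ℕ ℤ) : ℤ := MvPolynomial.eval (fun _ => (1 : ℤ)) f

/-- Left weak order: `a ≤_L b` iff `b = p a` with `ℓ(p) + ℓ(a) = ℓ(b)`. -/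
def leL (a b : Equiv.Perm ℕ) : Prop := len (b * a⁻¹) + len a = len b

namespace SchubProof

/-! ### Divided difference basics -/

lemma swapVars_add (i : ℕ) (f g : MvPolynomial ℕ ℤ) :
    swapVars i (f + g) = swapVars i f + swapVars i g := map_add _ _ _

lemma swapVars_mul (i : ℕ) (f g : MvPolynomial ℕ ℤ) :
    swapVars i (f * g) = swapVars i f * swapVars i g := map_mul _ _ _

lemma swapVars_sub (i : ℕ) (f g : MvPolynomial ℕ ℤ) :
    swapVars i (f - g) = swapVars i f - swapVars i g := map_sub _ _ _

lemma swapVars_X (i j : ℕ) : swapVars i (X j) = X (Equiv.swap i (i+1) j) :=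
  rename_X _ _

lemma swapVars_swapVars (i : ℕ) (f : MvPolynomial ℕ ℤ) :
    swapVars i (swapVars i f) = f := by
  unfold swapVars
  rw [rename_rename]
  have : (⇑(Equiv.swap i (i+1)) ∘ ⇑(Equiv.swap i (i+1))) = id := by
    funext x; simp [Equiv.swap_apply_self]
  rw [this, rename_id, AlgHom.id_apply]

lemma exists_divDiff (i : ℕ) (f : MvPolynomial ℕ ℤ) :
    ∃ g, f - swapVars i f = (X i - X (i + 1)) * g := by
  induction f using MvPolynomial.induction_on with
  | C a => exact ⟨0, by simp [swapVars, mul_zero]⟩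
  | add p q hp hq =>
      obtain ⟨gp, hgp⟩ := hp; obtain ⟨gq, hgq⟩ := hq
      exact ⟨gp + gq, by rw [swapVars_add]; linear_combination hgp + hgq⟩
  | mul_X p j hp =>
      obtain ⟨g, hg⟩ := hp
      refine ⟨g * X j + swapVars i p *
        (if j = i then (1 : MvPolynomial ℕ ℤ) else if j = i + 1 then -1 else 0), ?_⟩
      have key : X (Equiv.swap i (i+1) j) = X j - (X i - X (i+1)) *
          (if j = i then (1 : MvPolynomial ℕ ℤ) else if j = i + 1 then -1 else 0) := by
        split_ifs with h1 h2
        · subst h1; rw [Equiv.swap_apply_left]; ring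
        · subst h2; rw [Equiv.swap_apply_right]; ring
        · rw [Equiv.swap_apply_of_ne_of_ne h1 h2]; ring
      rw [swapVars_mul, swapVars_X, key]
      linear_combination (X j : MvPolynomial ℕ ℤ) * hg

lemma X_sub_X_ne (i j : ℕ) (h : i ≠ j) : (X i - X j : MvPolynomial ℕ ℤ) ≠ 0 :=
  sub_ne_zero_of_ne (fun hc => h (MvPolynomial.X_injective hc))

lemma divDiff_spec (i : ℕ) (f : MvPolynomial ℕ ℤ) :
    f - swapVars i f = (X i - X (i + 1)) * divDiff i f := by
  unfold divDiff
  rw [dif_pos (exists_divDiff i f)]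
  exact (exists_divDiff i f).choose_spec

lemma divDiff_eq (i : ℕ) (f g : MvPolynomial ℕ ℤ)
    (h : f - swapVars i f = (X i - X (i + 1)) * g) : divDiff i f = g := by
  have h2 := divDiff_spec i f
  have := h2.symm.trans h
  exact mul_left_cancel₀ (X_sub_X_ne i (i+1) (by omega)) this

lemma divDiff_zero (i : ℕ) : divDiff i 0 = 0 :=
  divDiff_eq _ _ _ (by simp [swapVars])

lemma divDiff_add (i : ℕ) (f g : MvPolynomial ℕ ℤ) :
    divDiff i (f + g) = divDiff i f + divDiff i g :=
  divDiff_eq _ _ _ (by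
    rw [swapVars_add]
    linear_combination divDiff_spec i f + divDiff_spec i g)

lemma swapVars_divDiff (i : ℕ) (f : MvPolynomial ℕ ℤ) :
    swapVars i (divDiff i f) = divDiff i f := by
  have h := divDiff_spec i f
  have h2 := congrArg (swapVars i) h
  rw [swapVars_sub, swapVars_swapVars, swapVars_mul, swapVars_sub,
    swapVars_X, swapVars_X, Equiv.swap_apply_left, Equiv.swap_apply_right] at h2
  have h3 : f - swapVars i f = (X i - X (i+1)) * swapVars i (divDiff i f) := by
    linear_combination -h2
  exact (mul_left_cancel₀ (X_sub_X_ne i (i+1) (by omega)) (h.symm.trans h3)).symm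

lemma divDiff_divDiff (i : ℕ) (f : MvPolynomial ℕ ℤ) :
    divDiff i (divDiff i f) = 0 :=
  divDiff_eq _ _ _ (by rw [swapVars_divDiff]; ring)

lemma divDiff_mul (i : ℕ) (f g : MvPolynomial ℕ ℤ) :
    divDiff i (f * g) = divDiff i f * g + swapVars i f * divDiff i g :=
  divDiff_eq _ _ _ (by
    rw [swapVars_mul]
    linear_combination g * divDiff_spec i f + swapVars i f * divDiff_spec i g)

lemma divDiff_smul (i : ℕ) (z : ℤ) (f : MvPolynomial ℕ ℤ) :
    divDiff i (z • f) = z • divDiff i f :=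
  divDiff_eq _ _ _ (by
    rw [zsmul_eq_mul, zsmul_eq_mul]
    have : swapVars i ((z : MvPolynomial ℕ ℤ) * f) = z * swapVars i f := by
      rw [swapVars_mul]; congr 1; simp [swapVars]
    rw [this]
    linear_combination (z : MvPolynomial ℕ ℤ) * divDiff_spec i f)

lemma divDiff_of_symm (i : ℕ) (f : MvPolynomial ℕ ℤ) (h : swapVars i f = f) :
    divDiff i f = 0 :=
  divDiff_eq _ _ _ (by rw [h]; ring)

/-! ### Commutation and braid relations -/

lemma swapVars_X_of_far {i j : ℕ} (h1 : j ≠ i) (h2 : j ≠ i + 1) :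
    swapVars i (X j) = (X j : MvPolynomial ℕ ℤ) := by
  rw [swapVars_X, Equiv.swap_apply_of_ne_of_ne h1 h2]

lemma sv_comm_far {i j : ℕ} (h : i + 2 ≤ j) (f : MvPolynomial ℕ ℤ) :
    swapVars i (swapVars j f) = swapVars j (swapVars i f) := by
  unfold swapVars
  rw [rename_rename, rename_rename]
  have hfun : ⇑(Equiv.swap i (i+1)) ∘ ⇑(Equiv.swap j (j+1))
      = ⇑(Equiv.swap j (j+1)) ∘ ⇑(Equiv.swap i (i+1)) := by
    funext x
    simp only [Function.comp_apply, Equiv.swap_apply_def]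
    split_ifs <;> first | contradiction | omega
  rw [hfun]

lemma divDiff_comm_far {i j : ℕ} (h : i + 2 ≤ j) (f : MvPolynomial ℕ ℤ) :
    divDiff i (divDiff j f) = divDiff j (divDiff i f) := by
  have hiX : swapVars i (X j - X (j+1)) = (X j - X (j+1) : MvPolynomial ℕ ℤ) := by
    rw [swapVars_sub, swapVars_X_of_far (by omega) (by omega),
      swapVars_X_of_far (by omega) (by omega)]
  have hjX : swapVars j (X i - X (i+1)) = (X i - X (i+1) : MvPolynomial ℕ ℤ) := by
    rw [swapVars_sub, swapVars_X_of_far (by omega) (by omega),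
      swapVars_X_of_far (by omega) (by omega)]
  have h1 := divDiff_spec j f
  have h2 := divDiff_spec i (divDiff j f)
  have h3 := divDiff_spec i f
  have h4 := divDiff_spec j (divDiff i f)
  have h1' := congrArg (swapVars i) h1
  rw [swapVars_sub, swapVars_mul, hiX] at h1'
  have h3' := congrArg (swapVars j) h3
  rw [swapVars_sub, swapVars_mul, hjX] at h3'
  have hcom : swapVars i (swapVars j f) = swapVars j (swapVars i f) := sv_comm_far h f
  have key : (X j - X (j+1)) * ((X i - X (i+1)) * divDiff i (divDiff j f))
      = (X j - X (j+1)) * ((X i - X (i+1)) * divDiff j (divDiff i f)) := by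
    linear_combination (-(X j - X (j+1)) : MvPolynomial ℕ ℤ) * h2 - h1 + h1'
      + (X i - X (i+1) : MvPolynomial ℕ ℤ) * h4 + h3 - h3' + hcom
  have hne : (X j - X (j+1) : MvPolynomial ℕ ℤ) ≠ 0 := X_sub_X_ne _ _ (by omega)
  have hne2 : (X i - X (i+1) : MvPolynomial ℕ ℤ) ≠ 0 := X_sub_X_ne _ _ (by omega)
  exact mul_left_cancel₀ hne2 (mul_left_cancel₀ hne key)

set_option maxHeartbeats 1000000 in
lemma sv_braid (i : ℕ) (f : MvPolynomial ℕ ℤ) :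
    swapVars i (swapVars (i+1) (swapVars i f))
      = swapVars (i+1) (swapVars i (swapVars (i+1) f)) := by
  unfold swapVars
  rw [rename_rename, rename_rename, rename_rename, rename_rename]
  have hfun : (⇑(Equiv.swap i (i+1)) ∘ ⇑(Equiv.swap (i+1) (i+1+1))) ∘ ⇑(Equiv.swap i (i+1))
      = (⇑(Equiv.swap (i+1) (i+1+1)) ∘ ⇑(Equiv.swap i (i+1))) ∘ ⇑(Equiv.swap (i+1) (i+1+1)) := by
    funext x
    simp only [Function.comp_apply, Equiv.swap_apply_def]
    split_ifs <;> first | contradiction | omega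
  rw [hfun]

lemma divDiff_braid (i : ℕ) (f : MvPolynomial ℕ ℤ) :
    divDiff i (divDiff (i+1) (divDiff i f))
      = divDiff (i+1) (divDiff i (divDiff (i+1) f)) := by
  set α : MvPolynomial ℕ ℤ := X i - X (i+1) with hα
  set β : MvPolynomial ℕ ℤ := X (i+1) - X (i+2) with hβ
  set γ : MvPolynomial ℕ ℤ := X i - X (i+2) with hγ
  have hsβ : swapVars i β = γ := by
    rw [hβ, hγ, swapVars_sub, swapVars_X, Equiv.swap_apply_right,
      swapVars_X_of_far (by omega) (by omega)]
  have htα : swapVars (i+1) α = γ := by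
    rw [hα, hγ, swapVars_sub, swapVars_X_of_far (by omega) (by omega), swapVars_X,
      Equiv.swap_apply_left]
  have hsγ : swapVars i γ = β := by
    rw [hγ, hβ, swapVars_sub, swapVars_X, Equiv.swap_apply_left,
      swapVars_X_of_far (by omega) (by omega)]
  have htγ : swapVars (i+1) γ = α := by
    rw [hγ, hα, swapVars_sub, swapVars_X_of_far (by omega) (by omega),
      show (i+2) = (i+1)+1 from rfl, swapVars_X, Equiv.swap_apply_right]
  set B := divDiff i f with hBdef
  set A := divDiff (i+1) B with hAdef
  set P := divDiff i A with hPdef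
  have hB : f - swapVars i f = α * B := divDiff_spec i f
  have hsB : swapVars i B = B := swapVars_divDiff i f
  have hA : B - swapVars (i+1) B = β * A := divDiff_spec (i+1) B
  have hP : A - swapVars i A = α * P := divDiff_spec i A
  have hA' := congrArg (swapVars i) hA
  rw [swapVars_sub, hsB, swapVars_mul, hsβ] at hA'
  have hB' := congrArg (swapVars (i+1)) hB
  rw [swapVars_sub, swapVars_mul, htα] at hB'
  have hB'' := congrArg (swapVars i) hB'
  rw [swapVars_sub, swapVars_mul, hsγ] at hB''
  set B' := divDiff (i+1) f with hB'def
  set A' := divDiff i B' with hA'def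
  set Q := divDiff (i+1) A' with hQdef
  have kB : f - swapVars (i+1) f = β * B' := divDiff_spec (i+1) f
  have ksB : swapVars (i+1) B' = B' := swapVars_divDiff (i+1) f
  have kA : B' - swapVars i B' = α * A' := divDiff_spec i B'
  have kQ : A' - swapVars (i+1) A' = β * Q := divDiff_spec (i+1) A'
  have kA' := congrArg (swapVars (i+1)) kA
  rw [swapVars_sub, ksB, swapVars_mul, htα] at kA'
  have kB' := congrArg (swapVars i) kB
  rw [swapVars_sub, swapVars_mul, hsβ] at kB'
  have kB'' := congrArg (swapVars (i+1)) kB'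
  rw [swapVars_sub, swapVars_mul, htγ] at kB''
  have hbr : swapVars i (swapVars (i+1) (swapVars i f))
      = swapVars (i+1) (swapVars i (swapVars (i+1) f)) := sv_braid i f
  have key : γ * (β * (α * P)) = γ * (β * (α * Q)) := by
    linear_combination (-(β * γ) : MvPolynomial ℕ ℤ) * hP - γ * hA + β * hA'
      - hB + hB' - hB''
      + (α * γ : MvPolynomial ℕ ℤ) * kQ + γ * kA - α * kA' + kB - kB' + kB'' - hbr
  have hα0 : α ≠ 0 := X_sub_X_ne _ _ (by omega)
  have hβ0 : β ≠ 0 := X_sub_X_ne _ _ (by omega)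
  have hγ0 : γ ≠ 0 := X_sub_X_ne _ _ (by omega)
  exact mul_left_cancel₀ hα0 (mul_left_cancel₀ hβ0 (mul_left_cancel₀ hγ0 key))

end SchubProof

namespace SchubProof


def invCount (n : ℕ) (w : Equiv.Perm ℕ) : ℕ :=
  (((Finset.Icc 1 n) ×ˢ (Finset.Icc 1 n)).filter
    (fun p => p.1 < p.2 ∧ w p.2 < w p.1)).card

lemma w0_apply (n i : ℕ) : w0 n i = if 1 ≤ i ∧ i ≤ n then n + 1 - i else i := rfl

lemma isPermOf_w0 (n : ℕ) : IsPermOf n (w0 n) := by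
  intro i hi
  rw [w0_apply]
  split_ifs with h <;> omega

lemma isPermOf_mono {m n : ℕ} {w : Equiv.Perm ℕ} (h : m ≤ n) (hw : IsPermOf m w) :
    IsPermOf n w := fun i hi => hw i (by omega)

lemma w0_descent {n i : ℕ} (h1 : 1 ≤ i) (h2 : i < n) : (w0 n) (i+1) < (w0 n) i := by
  rw [w0_apply, w0_apply]
  split_ifs <;> first | contradiction | omega

lemma perm_maps {n : ℕ} {w : Equiv.Perm ℕ} (hw : IsPermOf n w) {j : ℕ}
    (h1 : 1 ≤ j) (h2 : j ≤ n) : 1 ≤ w j ∧ w j ≤ n := by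
  constructor
  · rcases Nat.eq_zero_or_pos (w j) with h | h
    · exfalso
      have h0 : w 0 = 0 := hw 0 (Or.inl rfl)
      have : w j = w 0 := by rw [h, h0]
      have := w.injective this
      omega
    · exact h
  · by_contra hc
    push_neg at hc
    have : w (w j) = w j := hw (w j) (Or.inr hc)
    have := w.injective this
    omega

lemma mul_simpT_apply (w : Equiv.Perm ℕ) (i j : ℕ) :
    (w * simpT i) j = w (Equiv.swap i (i+1) j) := rfl

lemma mul_simpT_apply_left (w : Equiv.Perm ℕ) (i : ℕ) :
    (w * simpT i) i = w (i+1) := by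
  rw [mul_simpT_apply, Equiv.swap_apply_left]

lemma mul_simpT_apply_right (w : Equiv.Perm ℕ) (i : ℕ) :
    (w * simpT i) (i+1) = w i := by
  rw [mul_simpT_apply, Equiv.swap_apply_right]

lemma mul_simpT_apply_far (w : Equiv.Perm ℕ) {i j : ℕ} (h1 : j ≠ i) (h2 : j ≠ i+1) :
    (w * simpT i) j = w j := by
  rw [mul_simpT_apply, Equiv.swap_apply_of_ne_of_ne h1 h2]

lemma isPermOf_mul_simpT {n i : ℕ} {w : Equiv.Perm ℕ} (hw : IsPermOf n w)
    (h1 : 1 ≤ i) (h2 : i < n) : IsPermOf n (w * simpT i) := by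
  intro j hj
  rw [mul_simpT_apply_far w (by omega) (by omega)]
  exact hw j hj

lemma mul_simpT_simpT (w : Equiv.Perm ℕ) (i : ℕ) : (w * simpT i) * simpT i = w := by
  rw [mul_assoc]
  simp [simpT]

lemma invCount_lt {n : ℕ} (hn : 1 ≤ n) (w : Equiv.Perm ℕ) : invCount n w < n * n := by
  have h1 : invCount n w < ((Finset.Icc 1 n) ×ˢ (Finset.Icc 1 n)).card := by
    apply Finset.card_lt_card
    constructor
    · exact Finset.filter_subset _ _
    · intro hsub
      have h11 : ((1:ℕ), (1:ℕ)) ∈ (Finset.Icc 1 n) ×ˢ (Finset.Icc 1 n) := by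
        simp [Finset.mem_product, Finset.mem_Icc]; omega
      have := hsub h11
      simp only [Finset.mem_filter] at this
      omega
  have h2 : ((Finset.Icc 1 n) ×ˢ (Finset.Icc 1 n)).card = n * n := by
    rw [Finset.card_product, Nat.card_Icc, Nat.add_sub_cancel]
  omega

lemma ascent_invCount {n i : ℕ} {w : Equiv.Perm ℕ} (hw : IsPermOf n w)
    (h1 : 1 ≤ i) (h2 : i < n) (ha : w i < w (i+1)) :
    invCount n w + 1 ≤ invCount n (w * simpT i) := by
  classical
  set s := Equiv.swap i (i+1) with hs
  have sv : ∀ a, s a = if a = i then i+1 else if a = i+1 then i else a := by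
    intro a; rw [hs, Equiv.swap_apply_def]
  have ssv : ∀ a, s (s a) = a := fun a => Equiv.swap_apply_self _ _ _
  set F := (((Finset.Icc 1 n) ×ˢ (Finset.Icc 1 n)).filter
    (fun p => p.1 < p.2 ∧ w p.2 < w p.1)) with hF
  set F' := (((Finset.Icc 1 n) ×ˢ (Finset.Icc 1 n)).filter
    (fun p => p.1 < p.2 ∧ (w * simpT i) p.2 < (w * simpT i) p.1)) with hF'
  have hmem : ((i, i+1) : ℕ × ℕ) ∈ F' := by
    simp only [hF', Finset.mem_filter, Finset.mem_product, Finset.mem_Icc]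
    refine ⟨⟨⟨by omega, by omega⟩, ⟨by omega, by omega⟩⟩, by omega, ?_⟩
    rw [mul_simpT_apply_right, mul_simpT_apply_left]
    exact ha
  have hnotmemF : ((i, i+1) : ℕ × ℕ) ∉ F := by
    simp only [hF, Finset.mem_filter]
    rintro ⟨-, -, hlt⟩
    omega
  have hle : F.card ≤ (F'.erase ((i,i+1) : ℕ × ℕ)).card := by
    apply Finset.card_le_card_of_injOn (fun p => (s p.1, s p.2))
    · intro p hpF
      have hpne : p ≠ (i, i+1) := by rintro rfl; exact hnotmemF hpF
      simp only [Finset.mem_coe, hF, Finset.mem_filter, Finset.mem_product, Finset.mem_Icc] at hpF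
      obtain ⟨⟨⟨ha1, ha2⟩, hb1, hb2⟩, hab, hinv⟩ := hpF
      have hne : ¬(p.1 = i ∧ p.2 = i + 1) := by
        intro ⟨e1, e2⟩; exact hpne (Prod.ext e1 e2)
      simp only [Finset.mem_coe, Finset.mem_erase, hF', Finset.mem_filter, Finset.mem_product,
        Finset.mem_Icc]
      refine ⟨?_, ⟨⟨?_, ?_⟩, ?_, ?_⟩, ?_, ?_⟩
      · intro hc
        have e1 : s p.1 = i := by
          have := congrArg Prod.fst hc; simpa using this
        have e2 : s p.2 = i + 1 := by
          have := congrArg Prod.snd hc; simpa using this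
        rw [sv] at e1 e2
        split_ifs at e1 e2 <;> omega
      · rw [sv]; split_ifs <;> first | contradiction | omega
      · rw [sv]; split_ifs <;> first | contradiction | omega
      · rw [sv]; split_ifs <;> first | contradiction | omega
      · rw [sv]; split_ifs <;> first | contradiction | omega
      · show s p.1 < s p.2
        rw [sv, sv]; split_ifs <;> first | contradiction | omega
      · show (w * simpT i) (s p.2) < (w * simpT i) (s p.1)
        rw [mul_simpT_apply, mul_simpT_apply]
        show w (s (s p.2)) < w (s (s p.1))
        rw [ssv, ssv]
        exact hinv
    · intro p _ q _ heq
      have e1 : s p.1 = s q.1 := by have := congrArg Prod.fst heq; simpa using this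
      have e2 : s p.2 = s q.2 := by have := congrArg Prod.snd heq; simpa using this
      exact Prod.ext (s.injective e1) (s.injective e2)
  have : (F'.erase ((i,i+1) : ℕ × ℕ)).card = F'.card - 1 :=
    Finset.card_erase_of_mem hmem
  have hpos : 1 ≤ F'.card := Finset.card_pos.mpr ⟨_, hmem⟩
  show F.card + 1 ≤ F'.card
  omega

lemma no_ascent_eq_w0 {n : ℕ} {w : Equiv.Perm ℕ} (hw : IsPermOf n w)
    (h : ∀ i, 1 ≤ i → i < n → w (i+1) < w i) : w = w0 n := by
  have anti : ∀ b, ∀ a, 1 ≤ a → a < b → b ≤ n → w b < w a := by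
    intro b
    induction b with
    | zero => intro a _ h2 _; omega
    | succ c ih =>
        intro a h1 h2 h3
        rcases Nat.lt_or_ge a c with hlt | hge
        · have hc1 : 1 ≤ c := by omega
          exact lt_trans (h c hc1 (by omega)) (ih a h1 hlt (by omega))
        · have : a = c := by omega
          subst this
          exact h a h1 (by omega)
  have hub : ∀ k, 1 ≤ k → k ≤ n → w k ≤ n + 1 - k := by
    intro k h1 h2
    -- map Icc 1 k into Icc (w k) n
    have hinj : ∀ a ∈ Finset.Icc 1 k, w a ∈ Finset.Icc (w k) n := by
      intro a ha
      simp only [Finset.mem_Icc] at ha ⊢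
      constructor
      · rcases Nat.lt_or_ge a k with hlt | hge
        · exact le_of_lt (anti k a ha.1 hlt h2)
        · have : a = k := by omega
          subst this; exact le_refl _
      · exact (perm_maps hw ha.1 (by omega)).2
    have hcard := Finset.card_le_card_of_injOn w hinj
      (fun a _ b _ hab => w.injective hab)
    rw [Nat.card_Icc, Nat.card_Icc] at hcard
    have hwk := perm_maps hw h1 h2
    omega
  have hlb : ∀ k, 1 ≤ k → k ≤ n → n + 1 - k ≤ w k := by
    intro k h1 h2
    have hinj : ∀ a ∈ Finset.Icc k n, w a ∈ Finset.Icc 1 (w k) := by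
      intro a ha
      simp only [Finset.mem_Icc] at ha ⊢
      constructor
      · exact (perm_maps hw (by omega) ha.2).1
      · rcases Nat.lt_or_ge k a with hlt | hge
        · exact le_of_lt (anti a k h1 hlt ha.2)
        · have : a = k := by omega
          subst this; exact le_refl _
    have hcard := Finset.card_le_card_of_injOn w hinj
      (fun a _ b _ hab => w.injective hab)
    rw [Nat.card_Icc, Nat.card_Icc] at hcard
    omega
  ext i
  rcases Nat.eq_zero_or_pos i with rfl | hi
  · rw [hw 0 (Or.inl rfl), w0_apply]
    simp
  rcases Nat.lt_or_ge n i with hgt | hle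
  · rw [hw i (Or.inr hgt), w0_apply, if_neg (by omega)]
  · rw [w0_apply, if_pos ⟨hi, hle⟩]
    have := hub i hi hle
    have := hlb i hi hle
    omega


set_option maxHeartbeats 1000000 in
lemma simpT_comm {a b : ℕ} (h : a + 2 ≤ b) : simpT a * simpT b = simpT b * simpT a := by
  ext x
  simp only [simpT, Equiv.Perm.mul_apply, Equiv.swap_apply_def]
  split_ifs <;> first | contradiction | omega

set_option maxHeartbeats 1000000 in
lemma simpT_braid (a : ℕ) :
    simpT a * (simpT (a+1) * simpT a) = simpT (a+1) * (simpT a * simpT (a+1)) := by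
  ext x
  simp only [simpT, Equiv.Perm.mul_apply, Equiv.swap_apply_def]
  split_ifs <;> first | contradiction | omega

lemma exists_ascent_of_ne_w0 {n : ℕ} {w : Equiv.Perm ℕ} (hw : IsPermOf n w)
    (hne : w ≠ w0 n) : ∃ i, 1 ≤ i ∧ i < n ∧ w i < w (i+1) := by
  by_contra hc
  push_neg at hc
  apply hne
  apply no_ascent_eq_w0 hw
  intro i h1 h2
  have hle := hc i h1 h2
  have hne2 : w (i+1) ≠ w i := fun he => by
    have := w.injective he; omega
  omega

end SchubProof

namespace SchubProof

/-! ### Recursion machinery for `SchubAux` -/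

lemma schubAux_w0 (fuel n : ℕ) : SchubAux fuel n (w0 n) = staircase n := by
  cases fuel <;> simp [SchubAux]

lemma w0_ne_of_ascent {n i : ℕ} {w : Equiv.Perm ℕ} (h1 : 1 ≤ i) (h2 : i < n)
    (ha : w i < w (i+1)) : w ≠ w0 n := by
  rintro rfl
  have := w0_descent h1 h2
  omega

lemma schubAux_stable {n : ℕ} : ∀ (fuel : ℕ) {w : Equiv.Perm ℕ}, IsPermOf n w →
    n * n ≤ invCount n w + fuel → SchubAux (fuel+1) n w = SchubAux fuel n w := by
  intro fuel
  induction fuel with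
  | zero =>
      intro w hw hfuel
      have hw0 : w = w0 n := by
        rcases Nat.eq_zero_or_pos n with rfl | hn
        · exact no_ascent_eq_w0 hw (by omega)
        · exfalso; have := invCount_lt hn w; omega
      subst hw0
      rw [schubAux_w0, schubAux_w0]
  | succ fuel ih =>
      intro w hw hfuel
      by_cases hne : w = w0 n
      · subst hne; rw [schubAux_w0, schubAux_w0]
      · show SchubAux (fuel+1+1) n w = SchubAux (fuel+1) n w
        rw [SchubAux, SchubAux]
        rw [if_neg hne, if_neg hne]
        by_cases hex : ∃ i, 1 ≤ i ∧ i < n ∧ w i < w (i+1)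
        · rw [dif_pos hex, dif_pos hex]
          congr 1
          obtain ⟨hm1, hm2, hma⟩ := Nat.find_spec hex
          have hinc := ascent_invCount hw hm1 hm2 hma
          exact ih (isPermOf_mul_simpT hw hm1 hm2) (by omega)
        · rw [dif_neg hex, dif_neg hex]

lemma schubertIn_w0 (n : ℕ) : SchubertIn n (w0 n) = staircase n := schubAux_w0 _ _

lemma schubertIn_eq {n : ℕ} {w : Equiv.Perm ℕ} (hw : IsPermOf n w) (hne : w ≠ w0 n)
    (hex : ∃ i, 1 ≤ i ∧ i < n ∧ w i < w (i+1)) :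
    SchubertIn n w = divDiff (Nat.find hex)
      (SchubertIn n (w * simpT (Nat.find hex))) := by
  obtain ⟨hm1, hm2, hma⟩ := Nat.find_spec hex
  have hn : 1 ≤ n := by omega
  have hnn : 1 ≤ n * n := Nat.one_le_iff_ne_zero.mpr (by positivity)
  have hsucc : n * n = (n * n - 1) + 1 := by omega
  show SchubAux (n*n) n w = _
  rw [hsucc, SchubAux, if_neg hne, dif_pos hex]
  congr 1
  have hinc := ascent_invCount hw hm1 hm2 hma
  have hinv := invCount_lt hn w
  have := schubAux_stable (n*n-1)
    (isPermOf_mul_simpT hw hm1 hm2) (by omega : n*n ≤ invCount n (w * simpT (Nat.find hex)) + (n*n-1))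
  show _ = SchubAux (n*n) n (w * simpT (Nat.find hex))
  rw [hsucc]
  exact this.symm

lemma schubertIn_eq' {n : ℕ} {w : Equiv.Perm ℕ} (hw : IsPermOf n w) (hne : w ≠ w0 n)
    (hex : ∃ i, 1 ≤ i ∧ i < n ∧ w i < w (i+1)) :
    ∃ m, 1 ≤ m ∧ m < n ∧ w m < w (m+1) ∧
      (∀ l, l < m → ¬(1 ≤ l ∧ l < n ∧ w l < w (l+1))) ∧
      SchubertIn n w = divDiff m (SchubertIn n (w * simpT m)) :=
  ⟨Nat.find hex, (Nat.find_spec hex).1, (Nat.find_spec hex).2.1,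
    (Nat.find_spec hex).2.2, fun l hl => Nat.find_min hex hl,
    schubertIn_eq hw hne hex⟩

/-! ### The key lemma: the recursion holds at every ascent -/

lemma E_aux (n : ℕ) : ∀ (k : ℕ) (w : Equiv.Perm ℕ), IsPermOf n w →
    n * n - invCount n w ≤ k →
    ∀ j, 1 ≤ j → j < n → w j < w (j+1) →
    SchubertIn n w = divDiff j (SchubertIn n (w * simpT j)) := by
  intro k
  induction k with
  | zero =>
      intro w hw hk j hj1 hj2 hja
      exfalso
      have := invCount_lt (by omega : 1 ≤ n) w
      omega
  | succ k ih =>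
      intro w hw hk j hj1 hj2 hja
      have hn : 1 ≤ n := by omega
      have hinvw := invCount_lt hn w
      have hex : ∃ i, 1 ≤ i ∧ i < n ∧ w i < w (i+1) := ⟨j, hj1, hj2, hja⟩
      have hne : w ≠ w0 n := w0_ne_of_ascent hj1 hj2 hja
      obtain ⟨m, hm1, hm2, hma, hmin, hrec⟩ := schubertIn_eq' hw hne hex
      by_cases hjm : j = m
      · rw [hjm]; exact hrec
      have hmj : m < j := by
        by_contra hc
        push_neg at hc
        exact hmin j (by omega) ⟨hj1, hj2, hja⟩
      set u := w * simpT m with hudef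
      have hu : IsPermOf n u := isPermOf_mul_simpT hw hm1 hm2
      have hinvu := ascent_invCount hw hm1 hm2 hma
      rw [← hudef] at hinvu
      rcases Nat.lt_or_ge j (m+2) with hcase | hcase
      · -- j = m + 1 : braid case
        have hj : j = m + 1 := by omega
        subst hj
        have hja2 : w (m+1) < w (m+2) := hja
        -- u = w s_m ; ascent of u at m+1
        have hu1 : u (m+1) = w m := mul_simpT_apply_right w m
        have hu2 : u (m+2) = w (m+2) := mul_simpT_apply_far w (by omega) (by omega)
        have hau : u (m+1) < u (m+2) := by rw [hu1, hu2]; omega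
        have hEu : SchubertIn n u = divDiff (m+1) (SchubertIn n (u * simpT (m+1))) :=
          ih u hu (by omega) (m+1) (by omega) (by omega) hau
        set v := u * simpT (m+1) with hvdef
        have hv : IsPermOf n v := isPermOf_mul_simpT hu (by omega) (by omega)
        have hinvv := ascent_invCount hu (by omega) (by omega) hau
        rw [← hvdef] at hinvv
        -- ascent of v at m
        have hv1 : v m = w (m+1) := by
          rw [hvdef, mul_simpT_apply_far u (by omega) (by omega), hudef,
            mul_simpT_apply_left]
        have hv2 : v (m+1) = w (m+2) := by
          rw [hvdef, mul_simpT_apply_left, hu2]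
        have hav : v m < v (m+1) := by rw [hv1, hv2]; omega
        have hEv : SchubertIn n v = divDiff m (SchubertIn n (v * simpT m)) :=
          ih v hv (by omega) m hm1 hm2 hav
        -- z = w s_{m+1} s_m
        set y := w * simpT (m+1) with hydef
        have hy : IsPermOf n y := isPermOf_mul_simpT hw (by omega) (by omega)
        have hinvy := ascent_invCount hw (by omega) (by omega) hja
        rw [← hydef] at hinvy
        have hy1 : y m = w m := mul_simpT_apply_far w (by omega) (by omega)
        have hy2 : y (m+1) = w (m+2) := by rw [hydef, mul_simpT_apply_left]
        have hay : y m < y (m+1) := by rw [hy1, hy2]; omega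
        have hEy : SchubertIn n y = divDiff m (SchubertIn n (y * simpT m)) :=
          ih y hy (by omega) m hm1 hm2 hay
        set z := y * simpT m with hzdef
        have hz : IsPermOf n z := isPermOf_mul_simpT hy hm1 hm2
        have hinvz := ascent_invCount hy hm1 hm2 hay
        rw [← hzdef] at hinvz
        have hz1 : z (m+1) = w m := by
          rw [hzdef, mul_simpT_apply_right, hy1]
        have hz2 : z (m+2) = w (m+1) := by
          rw [hzdef, mul_simpT_apply_far y (by omega) (by omega), hydef,
            mul_simpT_apply_right]
        have haz : z (m+1) < z (m+2) := by rw [hz1, hz2]; omega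
        have hEz : SchubertIn n z = divDiff (m+1) (SchubertIn n (z * simpT (m+1))) :=
          ih z hz (by omega) (m+1) (by omega) (by omega) haz
        have hgroup : v * simpT m = z * simpT (m+1) := by
          rw [hvdef, hudef, hzdef, hydef]
          rw [mul_assoc, mul_assoc, mul_assoc, mul_assoc]
          congr 1
          exact simpT_braid m
        rw [hrec, hEu, hEv, hgroup,
          divDiff_braid m (SchubertIn n (z * simpT (m+1))), ← hEz, ← hEy]
      · -- far commutation case
        have hau : u j < u (j+1) := by
          rw [hudef, mul_simpT_apply_far w (by omega) (by omega),
            mul_simpT_apply_far w (by omega) (by omega)]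
          exact hja
        have hEu : SchubertIn n u = divDiff j (SchubertIn n (u * simpT j)) :=
          ih u hu (by omega) j hj1 hj2 hau
        set v := w * simpT j with hvdef
        have hv : IsPermOf n v := isPermOf_mul_simpT hw hj1 hj2
        have hinvv := ascent_invCount hw hj1 hj2 hja
        rw [← hvdef] at hinvv
        have hav : v m < v (m+1) := by
          rw [hvdef, mul_simpT_apply_far w (by omega) (by omega),
            mul_simpT_apply_far w (by omega) (by omega)]
          exact hma
        have hEv : SchubertIn n v = divDiff m (SchubertIn n (v * simpT m)) :=
          ih v hv (by omega) m hm1 hm2 hav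
        have hgroup : u * simpT j = v * simpT m := by
          rw [hudef, hvdef, mul_assoc, mul_assoc, simpT_comm hcase]
        rw [hrec, hEu, hgroup, hEv]
        exact divDiff_comm_far hcase (SchubertIn n (v * simpT m))

lemma E {n : ℕ} {w : Equiv.Perm ℕ} (hw : IsPermOf n w) {j : ℕ}
    (hj1 : 1 ≤ j) (hj2 : j < n) (hja : w j < w (j+1)) :
    SchubertIn n w = divDiff j (SchubertIn n (w * simpT j)) :=
  E_aux n (n * n - invCount n w) w hw le_rfl j hj1 hj2 hja

lemma D_descent {n i : ℕ} {w : Equiv.Perm ℕ} (hw : IsPermOf n w)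
    (h1 : 1 ≤ i) (h2 : i < n) (hd : w (i+1) < w i) :
    divDiff i (SchubertIn n w) = SchubertIn n (w * simpT i) := by
  have hu : IsPermOf n (w * simpT i) := isPermOf_mul_simpT hw h1 h2
  have ha : (w * simpT i) i < (w * simpT i) (i+1) := by
    rw [mul_simpT_apply_left, mul_simpT_apply_right]
    exact hd
  have := E hu h1 h2 ha
  rw [mul_simpT_simpT] at this
  exact this.symm

lemma D_ascent {n i : ℕ} {w : Equiv.Perm ℕ} (hw : IsPermOf n w)
    (h1 : 1 ≤ i) (h2 : i < n) (ha : w i < w (i+1)) :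
    divDiff i (SchubertIn n w) = 0 := by
  rw [E hw h1 h2 ha]
  exact divDiff_divDiff _ _

end SchubProof

namespace SchubProof

/-! ### Stability of Schubert polynomials -/

lemma swapVars_pow (i : ℕ) (f : MvPolynomial ℕ ℤ) (e : ℕ) :
    swapVars i (f ^ e) = swapVars i f ^ e := map_pow (rename _) f e

lemma divDiff_mono_step (k a : ℕ) (A : MvPolynomial ℕ ℤ) (hA : swapVars k A = A) :
    divDiff k (A * (X k ^ (a+1) * X (k+1) ^ a)) = A * (X k ^ a * X (k+1) ^ a) :=
  divDiff_eq _ _ _ (by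
    rw [swapVars_mul, hA, swapVars_mul, swapVars_pow, swapVars_pow,
      swapVars_X, swapVars_X, Equiv.swap_apply_left, Equiv.swap_apply_right]
    ring)

def Fm (M k : ℕ) : MvPolynomial ℕ ℤ :=
  ∏ i ∈ Finset.Icc 1 (M+1), X i ^ (if i ≤ k then M - i else M + 1 - i)

lemma Fm_zero (M : ℕ) : Fm M 0 = staircase (M+1) :=
  Finset.prod_congr rfl (fun i hi => by
    have := Finset.mem_Icc.mp hi
    rw [if_neg (by omega)])

lemma Fm_last (M : ℕ) : Fm M M = staircase M := by
  unfold Fm staircase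
  rw [show Finset.Icc 1 (M+1) = insert (M+1) (Finset.Icc 1 M) from
    (Finset.insert_Icc_right_eq_Icc_add_one (by omega)).symm]
  rw [Finset.prod_insert (by simp [Finset.mem_Icc])]
  rw [if_neg (by omega), Nat.sub_self, pow_zero, one_mul]
  exact Finset.prod_congr rfl (fun i hi => by
    have := Finset.mem_Icc.mp hi
    rw [if_pos (by omega)])

lemma divDiff_Fm (M k : ℕ) (h1 : 1 ≤ k) (h2 : k ≤ M) :
    divDiff k (Fm M (k-1)) = Fm M k := by
  classical
  set T := ((Finset.Icc 1 (M+1)).erase k).erase (k+1) with hT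
  have hkmem : k ∈ Finset.Icc 1 (M+1) := by simp [Finset.mem_Icc]; omega
  have hk1mem : (k+1) ∈ (Finset.Icc 1 (M+1)).erase k := by
    simp [Finset.mem_erase, Finset.mem_Icc]; omega
  have hsplit : ∀ e : ℕ → ℕ, (∏ i ∈ Finset.Icc 1 (M+1), X i ^ e i : MvPolynomial ℕ ℤ)
      = (∏ i ∈ T, X i ^ e i) * (X k ^ e k * X (k+1) ^ e (k+1)) := by
    intro e
    rw [← Finset.mul_prod_erase _ _ hkmem, ← Finset.mul_prod_erase _ _ hk1mem]
    ring
  have hTmem : ∀ i ∈ T, i ≠ k ∧ i ≠ k + 1 := by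
    intro i hi
    rw [hT, Finset.mem_erase, Finset.mem_erase] at hi
    exact ⟨hi.2.1, hi.1⟩
  set A : MvPolynomial ℕ ℤ := ∏ i ∈ T, X i ^ (if i ≤ k then M - i else M + 1 - i)
    with hAdef
  have hA : swapVars k A = A := by
    rw [hAdef]
    unfold swapVars
    rw [map_prod]
    apply Finset.prod_congr rfl
    intro i hi
    obtain ⟨hik, hik1⟩ := hTmem i hi
    show swapVars k (X i ^ (if i ≤ k then M - i else M + 1 - i)) = _
    rw [swapVars_pow, swapVars_X_of_far hik hik1]
  have e1 : Fm M (k-1) = A * (X k ^ ((M-k)+1) * X (k+1) ^ (M-k)) := by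
    unfold Fm
    rw [hsplit]
    have g1 : (if k ≤ k-1 then M - k else M + 1 - k) = (M-k)+1 := by
      rw [if_neg (by omega)]; omega
    have g2 : (if k+1 ≤ k-1 then M - (k+1) else M + 1 - (k+1)) = M-k := by
      rw [if_neg (by omega)]; omega
    rw [g1, g2]
    congr 1
    rw [hAdef]
    apply Finset.prod_congr rfl
    intro i hi
    obtain ⟨hik, _⟩ := hTmem i hi
    congr 1
    by_cases hle : i ≤ k
    · rw [if_pos (by omega), if_pos hle]
    · rw [if_neg (by omega), if_neg hle]
  have e2 : Fm M k = A * (X k ^ (M-k) * X (k+1) ^ (M-k)) := by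
    unfold Fm
    rw [hsplit]
    have g1 : (if k ≤ k then M - k else M + 1 - k) = M-k := by rw [if_pos le_rfl]
    have g2 : (if k+1 ≤ k then M - (k+1) else M + 1 - (k+1)) = M-k := by
      rw [if_neg (by omega)]; omega
    rw [g1, g2, hAdef]
  rw [e1, e2]
  exact divDiff_mono_step k (M-k) A hA

def chainPerm (M : ℕ) : ℕ → Equiv.Perm ℕ
  | 0 => w0 M
  | (t+1) => chainPerm M t * simpT (M - t)

def cf (M t x : ℕ) : ℕ :=
  if x = 0 then 0
  else if x ≤ M - t then M + 1 - x
  else if x = M - t + 1 then M + 1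
  else if x ≤ M + 1 then M + 2 - x
  else x

lemma chainPerm_apply (M : ℕ) : ∀ t, t ≤ M → ∀ x, chainPerm M t x = cf M t x := by
  intro t
  induction t with
  | zero =>
      intro _ x
      show w0 M x = cf M 0 x
      rw [w0_apply]
      unfold cf
      split_ifs <;> first | contradiction | omega
  | succ t ih =>
      intro ht x
      show (chainPerm M t * simpT (M - t)) x = cf M (t+1) x
      rw [mul_simpT_apply]
      rcases eq_or_ne x (M - t) with h1 | h1
      · subst h1
        rw [Equiv.swap_apply_left, ih (by omega)]
        unfold cf
        split_ifs <;> first | contradiction | omega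
      · rcases eq_or_ne x (M - t + 1) with h2 | h2
        · subst h2
          rw [Equiv.swap_apply_right, ih (by omega)]
          unfold cf
          split_ifs <;> first | contradiction | omega
        · rw [Equiv.swap_apply_of_ne_of_ne h1 h2, ih (by omega)]
          unfold cf
          split_ifs <;> first | contradiction | omega

lemma chainPerm_isPermOf (M : ℕ) : ∀ t, t ≤ M → IsPermOf (M+1) (chainPerm M t) := by
  intro t
  induction t with
  | zero => intro _; exact isPermOf_mono (Nat.le_succ M) (isPermOf_w0 M)
  | succ t ih =>
      intro ht
      exact isPermOf_mul_simpT (ih (by omega)) (by omega) (by omega)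

lemma chainPerm_last (M : ℕ) : chainPerm M M = w0 (M+1) := by
  ext x
  rw [chainPerm_apply M M le_rfl, w0_apply]
  unfold cf
  split_ifs <;> first | contradiction | omega

lemma schubertIn_w0M (M : ℕ) : SchubertIn (M+1) (w0 M) = staircase M := by
  have main : ∀ s, s ≤ M → SchubertIn (M+1) (chainPerm M (M - s)) = Fm M s := by
    intro s
    induction s with
    | zero =>
        intro _
        rw [Nat.sub_zero, chainPerm_last, schubertIn_w0, Fm_zero]
    | succ s ihs =>
        intro hs
        set t := M - (s+1) with ht
        clear_value t
        have htM : t ≤ M := by omega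
        have htt : t + 1 = M - s := by omega
        have hasc : chainPerm M t (M - t) < chainPerm M t (M - t + 1) := by
          rw [chainPerm_apply M t htM, chainPerm_apply M t htM]
          unfold cf
          split_ifs <;> first | contradiction | omega
        have hj1 : 1 ≤ M - t := by omega
        have hj2 : M - t < M + 1 := by omega
        have hE := E (chainPerm_isPermOf M t htM) hj1 hj2 hasc
        have hstep : chainPerm M t * simpT (M - t) = chainPerm M (t+1) := rfl
        rw [hstep, htt] at hE
        rw [hE, ihs (by omega)]
        have hMt : M - t = s + 1 := by omega
        rw [hMt]
        have := divDiff_Fm M (s+1) (by omega) (by omega)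
        simpa using this
  have hmain := main M le_rfl
  rw [Nat.sub_self] at hmain
  rw [show chainPerm M 0 = w0 M from rfl] at hmain
  rw [hmain, Fm_last]

lemma step_stab {M : ℕ} : ∀ (k : ℕ) (w : Equiv.Perm ℕ), IsPermOf M w →
    M * M - invCount M w ≤ k → SchubertIn (M+1) w = SchubertIn M w := by
  intro k
  induction k with
  | zero =>
      intro w hw hk
      by_cases hne : w = w0 M
      · subst hne; rw [schubertIn_w0M, schubertIn_w0]
      · exfalso
        obtain ⟨j, hj1, hj2, _⟩ := exists_ascent_of_ne_w0 hw hne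
        have := invCount_lt (by omega : 1 ≤ M) w
        omega
  | succ k ih =>
      intro w hw hk
      by_cases hne : w = w0 M
      · subst hne; rw [schubertIn_w0M, schubertIn_w0]
      · have hex := exists_ascent_of_ne_w0 hw hne
        obtain ⟨m, hm1, hm2, hma, hmin, hrec⟩ := schubertIn_eq' hw hne hex
        have hM1 : 1 ≤ M := by omega
        have hE := E (isPermOf_mono (Nat.le_succ M) hw) hm1 (by omega) hma
        rw [hrec, hE]
        congr 1
        have h1 := ascent_invCount hw hm1 hm2 hma
        have h2 := invCount_lt hM1 w
        exact ih _ (isPermOf_mul_simpT hw hm1 hm2) (by omega)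

lemma schubertIn_stable {m M : ℕ} {w : Equiv.Perm ℕ} (h : m ≤ M) (hw : IsPermOf m w) :
    SchubertIn M w = SchubertIn m w := by
  induction M, h using Nat.le_induction with
  | base => rfl
  | succ M hm ih =>
      rw [← ih]
      exact step_stab (M * M - invCount M w) w (isPermOf_mono hm hw) le_rfl

lemma schubert_eq {n : ℕ} {w : Equiv.Perm ℕ} (hw : IsPermOf n w) :
    Schubert w = SchubertIn n w := by
  classical
  have hfp : FinPerm w := ⟨n, hw⟩
  unfold Schubert
  rw [dif_pos hfp]
  exact (schubertIn_stable (Nat.find_min' hfp hw) (Nat.find_spec hfp)).symm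

lemma divDiff_Schubert {i : ℕ} (hi : 1 ≤ i) {w : Equiv.Perm ℕ} (hw : FinPerm w) :
    divDiff i (Schubert w) = if w (i+1) < w i then Schubert (w * simpT i) else 0 := by
  obtain ⟨n₀, hw₀⟩ := hw
  set n := max n₀ (i+1) with hn
  have hwn : IsPermOf n w := isPermOf_mono (le_max_left _ _) hw₀
  have hin : i < n := by
    have := le_max_right n₀ (i+1); omega
  rw [schubert_eq hwn]
  by_cases hd : w (i+1) < w i
  · rw [if_pos hd, D_descent hwn hi hin hd,
      schubert_eq (isPermOf_mul_simpT hwn hi hin)]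
  · rw [if_neg hd]
    have hne : w i ≠ w (i+1) := fun he => by have := w.injective he; omega
    exact D_ascent hwn hi hin (by omega)


/-! ### Evaluation at 1 -/

lemma evalOne_mul (f g : MvPolynomial ℕ ℤ) : evalOne (f * g) = evalOne f * evalOne g :=
  map_mul _ _ _

lemma evalOne_smul (z : ℤ) (f : MvPolynomial ℕ ℤ) : evalOne (z • f) = z * evalOne f := by
  unfold evalOne
  rw [zsmul_eq_mul, map_mul, map_intCast, Int.cast_id]

lemma evalOne_swapVars (i : ℕ) (f : MvPolynomial ℕ ℤ) :
    evalOne (swapVars i f) = evalOne f := by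
  unfold evalOne swapVars
  rw [eval_rename]
  rfl

end SchubProof


open SchubProof in
theorem kronecker_relation
    (c : Equiv.Perm ℕ → Equiv.Perm ℕ → Equiv.Perm ℕ → ℕ)
    (hsupp : ∀ u v : Equiv.Perm ℕ, {w : Equiv.Perm ℕ | c u v w ≠ 0}.Finite)
    (hvanish : ∀ u v w : Equiv.Perm ℕ, ¬ FinPerm w → c u v w = 0)
    (hexp : ∀ u v : Equiv.Perm ℕ, FinPerm u → FinPerm v →
      Schubert u * Schubert v = ∑ᶠ w : Equiv.Perm ℕ, (c u v w : ℤ) • Schubert w)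
    (n : ℕ) (u v : Equiv.Perm ℕ) (hu : IsPermOf n u) (hv : IsPermOf n v)
    (i : ℕ) (hi1 : 1 ≤ i) (hi2 : i < n) :
    (∑ᶠ p ∈ {p : Equiv.Perm ℕ | p (i + 1) < p i},
        (c u v p : ℤ) * evalOne (Schubert (p * simpT i)))
      = (if v (i + 1) < v i then 1 else 0) * evalOne (Schubert u) * evalOne (Schubert (v * simpT i))
        + (if u (i + 1) < u i then 1 else 0) * evalOne (Schubert (u * simpT i)) * evalOne (Schubert v) := by
  classical
  have hfu : FinPerm u := ⟨n, hu⟩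
  have hfv : FinPerm v := ⟨n, hv⟩
  set Dhom : MvPolynomial ℕ ℤ →+ MvPolynomial ℕ ℤ :=
    AddMonoidHom.mk' (divDiff i) (divDiff_add i) with hD
  set Ehom : MvPolynomial ℕ ℤ →+ ℤ :=
    (MvPolynomial.eval (fun _ => (1:ℤ)) : MvPolynomial ℕ ℤ →+* ℤ).toAddMonoidHom with hEh
  set φ : MvPolynomial ℕ ℤ →+ ℤ := Ehom.comp Dhom with hphi
  have hφ : ∀ f, φ f = evalOne (divDiff i f) := fun f => rfl
  have hsupp' : (Function.support fun w => (c u v w : ℤ) • Schubert w).Finite := by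
    apply Set.Finite.subset (hsupp u v)
    intro w hw
    simp only [Function.mem_support] at hw
    show c u v w ≠ 0
    intro h0
    apply hw
    rw [h0]
    simp
  have key := congrArg φ (hexp u v hfu hfv)
  rw [AddMonoidHom.map_finsum φ hsupp'] at key
  have hL : φ (Schubert u * Schubert v)
      = (if v (i + 1) < v i then 1 else 0) * evalOne (Schubert u)
          * evalOne (Schubert (v * simpT i))
        + (if u (i + 1) < u i then 1 else 0) * evalOne (Schubert (u * simpT i))
          * evalOne (Schubert v) := by
    rw [hφ, divDiff_mul]
    show evalOne _ = _
    rw [show evalOne (divDiff i (Schubert u) * Schubert v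
        + swapVars i (Schubert u) * divDiff i (Schubert v))
      = evalOne (divDiff i (Schubert u)) * evalOne (Schubert v)
        + evalOne (swapVars i (Schubert u)) * evalOne (divDiff i (Schubert v)) by
      unfold evalOne; rw [map_add, map_mul, map_mul]]
    rw [divDiff_Schubert hi1 hfu, divDiff_Schubert hi1 hfv, evalOne_swapVars]
    split_ifs with h1 h2 h2 <;>
      simp only [evalOne, map_zero] <;> ring
  have hR : (∑ᶠ w, φ ((c u v w : ℤ) • Schubert w))
      = ∑ᶠ p ∈ {p : Equiv.Perm ℕ | p (i + 1) < p i},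
          (c u v p : ℤ) * evalOne (Schubert (p * simpT i)) := by
    rw [finsum_mem_def]
    apply finsum_congr
    intro p
    rw [Set.indicator_apply]
    simp only [Set.mem_setOf_eq]
    rw [hφ, divDiff_smul, evalOne_smul]
    by_cases hfp : FinPerm p
    · rw [divDiff_Schubert hi1 hfp]
      by_cases hd : p (i + 1) < p i
      · rw [if_pos hd, if_pos hd]
      · rw [if_neg hd, if_neg hd]
        show (c u v p : ℤ) * evalOne 0 = 0
        unfold evalOne
        rw [map_zero, mul_zero]
    · have hc0 : c u v p = 0 := hvanish u v p hfp
      rw [hc0]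
      simp
  calc (∑ᶠ p ∈ {p : Equiv.Perm ℕ | p (i + 1) < p i},
          (c u v p : ℤ) * evalOne (Schubert (p * simpT i)))
      = ∑ᶠ w, φ ((c u v w : ℤ) • Schubert w) := hR.symm
    _ = φ (Schubert u * Schubert v) := key.symm
    _ = _ := hL

end
end

section
/- If w ∈ S_n is identified with its image ι(w) ∈ S_{n+1} under the standard inclusion (fixing n+1), then the Schubert polynomials agree: 𝔖_w = 𝔖_{ι(w)}. Consequently Schubert polynomials are well-defined indexed by elements of S_∞. -/
open MvPolynomial

noncomputable section

open MvPolynomial Finset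

lemma X_sub_ne (i : ℕ) : (X i - X (i+1) : MvPolynomial ℕ ℤ) ≠ 0 := by
  intro h
  have := MvPolynomial.X_injective (R := ℤ) (sub_eq_zero.mp h)
  omega

lemma divDiff_eq (i : ℕ) (f g : MvPolynomial ℕ ℤ)
    (h : f - swapVars i f = (X i - X (i + 1)) * g) : divDiff i f = g := by
  have hex : ∃ g, f - swapVars i f = (X i - X (i + 1)) * g := ⟨g, h⟩
  rw [divDiff, dif_pos hex]
  exact mul_left_cancel₀ (X_sub_ne i) (by rw [← hex.choose_spec, h])

lemma swapVars_mono (i : ℕ) (S : Finset ℕ) (e : ℕ → ℕ)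
    (hS : ∀ j, j ∈ S ↔ Equiv.swap i (i+1) j ∈ S) :
    swapVars i (∏ j ∈ S, X j ^ e j)
      = ∏ j ∈ S, (X j : MvPolynomial ℕ ℤ) ^ e (Equiv.swap i (i+1) j) := by
  rw [swapVars, map_prod]
  simp only [map_pow, rename_X]
  refine Finset.prod_equiv (Equiv.swap i (i+1)) (fun j => hS j) (fun j hj => ?_)
  congr 1
  rw [Equiv.swap_apply_self]
lemma key (S : Finset ℕ) (i m : ℕ) (hi : i ∈ S) (hi1 : i+1 ∈ S) (e : ℕ → ℕ)
    (hei : e i = m + 1) (hei1 : e (i+1) = m) :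
    (∏ j ∈ S, (X j : MvPolynomial ℕ ℤ) ^ e j) - swapVars i (∏ j ∈ S, X j ^ e j)
      = (X i - X (i+1)) * ∏ j ∈ S, X j ^ (if j = i then m else e j) := by
  have hS : ∀ j, j ∈ S ↔ Equiv.swap i (i+1) j ∈ S := by
    intro j
    rcases eq_or_ne j i with rfl | h1
    · simp [Equiv.swap_apply_left, hi, hi1]
    rcases eq_or_ne j (i+1) with rfl | h2
    · simp [Equiv.swap_apply_right, hi, hi1]
    · rw [Equiv.swap_apply_of_ne_of_ne h1 h2]
  rw [swapVars_mono i S e hS]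
  have hmem : i + 1 ∈ S.erase i := Finset.mem_erase.mpr ⟨by omega, hi1⟩
  have expand : ∀ f : ℕ → ℕ,
      (∏ j ∈ S, (X j : MvPolynomial ℕ ℤ) ^ f j)
        = X i ^ f i * (X (i+1) ^ f (i+1) * ∏ j ∈ (S.erase i).erase (i+1), X j ^ f j) := by
    intro f
    rw [← Finset.mul_prod_erase S _ hi, ← Finset.mul_prod_erase _ _ hmem]
  rw [expand, expand, expand]
  have hQ : ∀ (f : ℕ → ℕ) (hf : ∀ j, j ≠ i → j ≠ i + 1 → f j = e j),
      (∏ j ∈ (S.erase i).erase (i+1), (X j : MvPolynomial ℕ ℤ) ^ f j)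
        = ∏ j ∈ (S.erase i).erase (i+1), X j ^ e j := by
    intro f hf
    refine Finset.prod_congr rfl (fun j hj => ?_)
    simp only [Finset.mem_erase] at hj
    rw [hf j hj.2.1 hj.1]
  rw [hQ (fun j => e (Equiv.swap i (i+1) j))
      (fun j h1 h2 => congrArg e (Equiv.swap_apply_of_ne_of_ne h1 h2)),
    hQ (fun j => if j = i then m else e j) (fun j h1 _ => if_neg h1)]
  rw [Equiv.swap_apply_left, Equiv.swap_apply_right, hei, hei1, if_pos rfl,
    if_neg (show i + 1 ≠ i by omega)]
  ring
def eP (n k j : ℕ) : ℕ := (if j ≤ n then n - j else 0) + (if n - k + 1 ≤ j ∧ j ≤ n then 1 else 0)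

def Pk (n k : ℕ) : MvPolynomial ℕ ℤ := ∏ j ∈ Finset.Icc 1 (n+1), X j ^ eP n k j

lemma Pk_zero (n : ℕ) : Pk n 0 = staircase n := by
  rw [Pk, staircase]
  rw [← Finset.prod_subset (Finset.Icc_subset_Icc_right (by omega : n ≤ n + 1))
    (fun x hx hx2 => by
      have h1 : x = n + 1 := by
        simp only [Finset.mem_Icc] at hx hx2; omega
      subst h1
      simp [eP])]
  refine Finset.prod_congr rfl (fun j hj => ?_)
  simp only [Finset.mem_Icc] at hj
  congr 1
  simp only [eP]
  split_ifs <;> omega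

lemma Pk_n (n : ℕ) : Pk n n = staircase (n+1) := by
  rw [Pk, staircase]
  refine Finset.prod_congr rfl (fun j hj => ?_)
  simp only [Finset.mem_Icc] at hj
  congr 1
  simp only [eP]
  split_ifs <;> omega

def wkFun (n k i : ℕ) : ℕ :=
  if 1 ≤ i ∧ i ≤ n - k then n + 1 - i
  else if i = n - k + 1 ∧ i ≤ n + 1 then n + 1
  else if 1 ≤ i ∧ i ≤ n + 1 then n + 2 - i
  else i

def wkP (n : ℕ) : ℕ → Equiv.Perm ℕ
  | 0 => w0 n
  | (k+1) => wkP n k * simpT (n - k)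

lemma wkP_apply (n : ℕ) : ∀ k, k ≤ n → ∀ i, wkP n k i = wkFun n k i := by
  intro k
  induction k with
  | zero =>
    intro _ i
    show (if 1 ≤ i ∧ i ≤ n then n + 1 - i else i) = wkFun n 0 i
    rw [wkFun]
    split_ifs <;> omega
  | succ k ih =>
    intro hk i
    have hk' : k ≤ n := by omega
    show wkP n k (Equiv.swap (n-k) (n-k+1) i) = wkFun n (k+1) i
    rcases eq_or_ne i (n-k) with rfl | h1
    · rw [Equiv.swap_apply_left, ih hk', wkFun, wkFun]
      split_ifs <;> omega
    rcases eq_or_ne i (n-k+1) with rfl | h2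
    · rw [Equiv.swap_apply_right, ih hk', wkFun, wkFun]
      split_ifs <;> omega
    · rw [Equiv.swap_apply_of_ne_of_ne h1 h2, ih hk', wkFun, wkFun]
      split_ifs <;> omega

lemma wkP_n (n : ℕ) : wkP n n = w0 (n+1) := by
  refine Equiv.ext (fun i => ?_)
  rw [wkP_apply n n le_rfl i]
  show wkFun n n i = (if 1 ≤ i ∧ i ≤ n + 1 then n + 1 + 1 - i else i)
  rw [wkFun]
  split_ifs <;> omega
lemma SchubAux_w0 (f n : ℕ) : SchubAux f n (w0 n) = staircase n := by
  cases f <;> simp [SchubAux]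

lemma chain (n : ℕ) : ∀ d k fuel, k + d = n → d ≤ fuel →
    SchubAux fuel (n+1) (wkP n k) = Pk n k := by
  intro d
  induction d with
  | zero =>
    intro k fuel hk _
    have hk' : k = n := by omega
    subst hk'
    rw [wkP_n, SchubAux_w0, Pk_n]
  | succ d ih =>
    intro k fuel hk hf
    have hkn : k + 1 ≤ n := by omega
    obtain ⟨f, rfl⟩ : ∃ f, fuel = f + 1 := ⟨fuel - 1, by omega⟩
    have happ := wkP_apply n k (by omega)
    have hval1 : wkP n k (n - k) = k + 1 := by
      rw [happ, wkFun, if_pos ⟨by omega, le_rfl⟩]; omega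
    have hval2 : wkP n k (n - k + 1) = n + 1 := by
      rw [happ, wkFun, if_neg (by omega), if_pos ⟨rfl, by omega⟩]
    have hne : wkP n k ≠ w0 (n+1) := by
      intro h
      have := DFunLike.congr_fun h (n - k + 1)
      simp only [hval2] at this
      have h2 : w0 (n+1) (n-k+1) = if 1 ≤ n-k+1 ∧ n-k+1 ≤ n+1 then n+1+1-(n-k+1) else (n-k+1) := rfl
      rw [h2, if_pos ⟨by omega, by omega⟩] at this
      omega
    have hasc : ∃ i, 1 ≤ i ∧ i < n + 1 ∧ wkP n k i < wkP n k (i + 1) := by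
      refine ⟨n - k, by omega, by omega, ?_⟩
      rw [hval1, hval2]; omega
    have hfind : Nat.find hasc = n - k := by
      rw [Nat.find_eq_iff]
      refine ⟨⟨by omega, by omega, by rw [hval1, hval2]; omega⟩, fun m hm => ?_⟩
      rintro ⟨hm1, -, hm3⟩
      rw [happ, happ, wkFun, wkFun, if_pos ⟨hm1, by omega⟩,
        if_pos ⟨by omega, by omega⟩] at hm3
      omega
    rw [SchubAux, if_neg hne, dif_pos hasc, hfind]
    have hrec : wkP n k * simpT (n - k) = wkP n (k+1) := rfl
    rw [hrec, ih (k+1) f (by omega) (by omega)]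
    apply divDiff_eq
    have hk1mem : n - k ∈ Finset.Icc 1 (n+1) := by simp only [Finset.mem_Icc]; omega
    have hk2mem : n - k + 1 ∈ Finset.Icc 1 (n+1) := by simp only [Finset.mem_Icc]; omega
    have := key (Finset.Icc 1 (n+1)) (n-k) k hk1mem hk2mem (eP n (k+1))
      (by simp only [eP]; split_ifs <;> omega)
      (by simp only [eP]; split_ifs <;> omega)
    rw [Pk, this]
    congr 1
    refine Finset.prod_congr rfl (fun j hj => ?_)
    simp only [Finset.mem_Icc] at hj
    congr 1
    simp only [eP]
    split_ifs <;> omega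
def invCount (n : ℕ) (w : Equiv.Perm ℕ) : ℕ :=
  ((Finset.Icc 1 n ×ˢ Finset.Icc 1 n).filter (fun p => p.1 < p.2 ∧ w p.2 < w p.1)).card

lemma invCount_swap (n i : ℕ) (w : Equiv.Perm ℕ) (h1 : 1 ≤ i) (h2 : i < n)
    (h3 : w i < w (i+1)) : invCount n (w * simpT i) = invCount n w + 1 := by
  classical
  set σ := Equiv.swap i (i+1) with hσ
  have hsimpT : simpT i = σ := rfl
  have horder : ∀ a b : ℕ, a < b → ¬(a = i ∧ b = i+1) → σ a < σ b := by
    intro a b hab hne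
    rw [hσ]
    simp only [Equiv.swap_apply_def]
    split_ifs <;> omega
  have hmemIcc : ∀ a : ℕ, 1 ≤ a → a ≤ n → 1 ≤ σ a ∧ σ a ≤ n := by
    intro a ha1 ha2
    rw [hσ]
    simp only [Equiv.swap_apply_def]
    split_ifs <;> omega
  have hself : ∀ a : ℕ, σ (σ a) = a := fun a => Equiv.swap_apply_self i (i+1) a
  have hinj : Function.Injective (fun p : ℕ × ℕ => (σ p.1, σ p.2)) := by
    intro p q hpq
    simp only [Prod.mk.injEq] at hpq
    exact Prod.ext (σ.injective hpq.1) (σ.injective hpq.2)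
  have hset : ((Finset.Icc 1 n ×ˢ Finset.Icc 1 n).filter
        (fun p => p.1 < p.2 ∧ (w * simpT i) p.2 < (w * simpT i) p.1))
      = insert (i, i+1) (((Finset.Icc 1 n ×ˢ Finset.Icc 1 n).filter
          (fun p => p.1 < p.2 ∧ w p.2 < w p.1)).image (fun p => (σ p.1, σ p.2))) := by
    ext p
    simp only [Finset.mem_filter, Finset.mem_insert, Finset.mem_image, Finset.mem_product,
      Finset.mem_Icc, hsimpT, Equiv.Perm.mul_apply]
    constructor
    · rintro ⟨⟨⟨hp11, hp12⟩, hp21, hp22⟩, hlt, hwlt⟩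
      by_cases hpi : p = (i, i+1)
      · exact Or.inl hpi
      · right
        have hne : ¬(p.1 = i ∧ p.2 = i+1) := by
          intro hc
          exact hpi (Prod.ext hc.1 hc.2)
        refine ⟨(σ p.1, σ p.2), ⟨⟨hmemIcc p.1 hp11 hp12, hmemIcc p.2 hp21 hp22⟩,
          horder p.1 p.2 hlt hne, ?_⟩, ?_⟩
        · exact hwlt
        · simp only [hself]
    · rintro (rfl | ⟨q, ⟨⟨⟨hq11, hq12⟩, hq21, hq22⟩, hlt, hwlt⟩, rfl⟩)
      · refine ⟨⟨⟨h1, by omega⟩, by omega, by omega⟩, by omega, ?_⟩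
        rw [Equiv.swap_apply_right, Equiv.swap_apply_left]
        exact h3
      · have hne : ¬(q.1 = i ∧ q.2 = i+1) := by
          rintro ⟨e1, e2⟩
          rw [e1, e2] at hwlt
          omega
        refine ⟨⟨hmemIcc q.1 hq11 hq12, hmemIcc q.2 hq21 hq22⟩,
          horder q.1 q.2 hlt hne, ?_⟩
        simpa only [hself] using hwlt
  rw [invCount, invCount, hset, Finset.card_insert_of_notMem, Finset.card_image_of_injective _ hinj]
  intro hmem
  obtain ⟨q, hq, heq⟩ := Finset.mem_image.mp hmem
  simp only [Prod.mk.injEq] at heq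
  have e1 : q.1 = i + 1 := σ.injective (by rw [heq.1, hσ, Equiv.swap_apply_right])
  have e2 : q.2 = i := σ.injective (by rw [heq.2, hσ, Equiv.swap_apply_left])
  have := (Finset.mem_filter.mp hq).2.1
  omega

lemma invCount_le_w0 (n : ℕ) (w : Equiv.Perm ℕ) : invCount n w ≤ invCount n (w0 n) := by
  apply Finset.card_le_card
  intro p hp
  simp only [Finset.mem_filter, Finset.mem_product, Finset.mem_Icc] at hp ⊢
  refine ⟨hp.1, hp.2.1, ?_⟩
  have e1 : w0 n p.1 = if 1 ≤ p.1 ∧ p.1 ≤ n then n + 1 - p.1 else p.1 := rfl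
  have e2 : w0 n p.2 = if 1 ≤ p.2 ∧ p.2 ≤ n then n + 1 - p.2 else p.2 := rfl
  rw [e1, e2]
  split_ifs <;> omega

lemma invCount_le_sq (n : ℕ) (w : Equiv.Perm ℕ) : invCount n w ≤ n * n := by
  refine le_trans (Finset.card_filter_le _ _) ?_
  rw [Finset.card_product, Nat.card_Icc]
  have : n + 1 - 1 = n := rfl
  rw [this]

lemma perm_maps (n : ℕ) (w : Equiv.Perm ℕ) (hw : IsPermOf n w) :
    ∀ i, 1 ≤ i → i ≤ n → 1 ≤ w i ∧ w i ≤ n := by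
  intro i hi1 hi2
  constructor
  · rcases Nat.eq_zero_or_pos (w i) with h0 | h0
    · have hz : w 0 = 0 := hw 0 (Or.inl rfl)
      have := w.injective (hz.trans h0.symm)
      omega
    · exact h0
  · by_contra hgt
    push_neg at hgt
    have := hw (w i) (Or.inr hgt)
    have := w.injective this
    omega

lemma IsPermOf_mul (n i : ℕ) (w : Equiv.Perm ℕ) (hw : IsPermOf n w) (h1 : 1 ≤ i)
    (h2 : i < n) : IsPermOf n (w * simpT i) := by
  intro j hj
  have hfix : simpT i j = j := Equiv.swap_apply_of_ne_of_ne (by omega) (by omega)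
  rw [Equiv.Perm.mul_apply, hfix]
  exact hw j hj

lemma eq_w0_of_no_ascent (n : ℕ) (w : Equiv.Perm ℕ) (hw : IsPermOf n w)
    (h : ∀ i, 1 ≤ i → i < n → w (i+1) < w i) : w = w0 n := by
  have upper : ∀ i, 1 ≤ i → i ≤ n → w i ≤ n + 1 - i := by
    intro i
    induction i with
    | zero => omega
    | succ j ihj =>
      intro _ hle
      rcases Nat.eq_zero_or_pos j with rfl | hj
      · have := perm_maps n w hw (0+1) (by omega) hle
        omega
      · have hwlt := h j hj (by omega)
        have := ihj (by omega) (by omega)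
        omega
  have lower : ∀ d i, 1 ≤ i → i ≤ n → n - i ≤ d → n + 1 - i ≤ w i := by
    intro d
    induction d with
    | zero =>
      intro i hi1 hi2 hi3
      have hin : i = n := by omega
      have := perm_maps n w hw i hi1 hi2
      omega
    | succ d ihd =>
      intro i hi1 hi2 hi3
      by_cases hc : n - i ≤ d
      · exact ihd i hi1 hi2 hc
      · have hin : i < n := by omega
        have hlow := ihd (i+1) (by omega) (by omega) (by omega)
        have := h i hi1 hin
        omega
  refine Equiv.ext (fun i => ?_)
  have hw0 : w0 n i = if 1 ≤ i ∧ i ≤ n then n + 1 - i else i := rfl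
  rw [hw0]
  split_ifs with hc
  · have ha := upper i hc.1 hc.2
    have hb := lower n i hc.1 hc.2 (by omega)
    omega
  · exact hw i (by omega)

lemma main_stab : ∀ m n (w : Equiv.Perm ℕ), IsPermOf n w →
    invCount n w + m = invCount n (w0 n) →
    ∀ f1 f2, m ≤ f1 → m + n ≤ f2 → SchubAux f2 (n+1) w = SchubAux f1 n w := by
  intro m
  induction m using Nat.strong_induction_on with
  | _ m ih =>
  intro n w hw hm f1 f2 hf1 hf2
  by_cases hw0 : w = w0 n
  · subst hw0
    rw [SchubAux_w0]
    have h0 : wkP n 0 = w0 n := rfl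
    rw [← h0, chain n n 0 f2 (by omega) (by omega), Pk_zero]
  · have hn : 1 ≤ n := by
      by_contra hn
      push_neg at hn
      apply hw0
      refine Equiv.ext (fun i => ?_)
      have hi : w i = i := by
        rcases Nat.eq_zero_or_pos i with rfl | hi
        · exact hw 0 (Or.inl rfl)
        · exact hw i (Or.inr (by omega))
      have hw0i : w0 n i = if 1 ≤ i ∧ i ≤ n then n + 1 - i else i := rfl
      rw [hi, hw0i]
      split_ifs <;> omega
    have h : ∃ i, 1 ≤ i ∧ i < n ∧ w i < w (i + 1) := by
      by_contra hno
      push_neg at hno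
      apply hw0
      apply eq_w0_of_no_ascent n w hw
      intro i hi1 hi2
      have hle := hno i hi1 hi2
      have hne : w (i+1) ≠ w i := fun hc => by
        have := w.injective hc
        omega
      omega
    have hspec := Nat.find_spec h
    have hinc := invCount_swap n (Nat.find h) w hspec.1 hspec.2.1 hspec.2.2
    have hle' := invCount_le_w0 n (w * simpT (Nat.find h))
    have hm1 : 1 ≤ m := by omega
    have h' : ∃ i, 1 ≤ i ∧ i < n + 1 ∧ w i < w (i + 1) :=
      ⟨Nat.find h, hspec.1, by omega, hspec.2.2⟩
    have hfle : Nat.find h' ≤ Nat.find h := Nat.find_le ⟨hspec.1, by omega, hspec.2.2⟩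
    have hfind : Nat.find h' = Nat.find h := by
      apply le_antisymm hfle
      have hs' := Nat.find_spec h'
      exact Nat.find_min' h ⟨hs'.1, by omega, hs'.2.2⟩
    have hne' : w ≠ w0 (n+1) := by
      intro he
      have ha := hw (n+1) (Or.inr (by omega))
      have hb : w0 (n+1) (n+1) = if 1 ≤ n+1 ∧ n+1 ≤ n+1 then n+1+1-(n+1) else n+1 := rfl
      rw [he, hb, if_pos ⟨by omega, le_rfl⟩] at ha
      omega
    obtain ⟨g1, rfl⟩ : ∃ g, f1 = g + 1 := ⟨f1 - 1, by omega⟩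
    obtain ⟨g2, rfl⟩ : ∃ g, f2 = g + 1 := ⟨f2 - 1, by omega⟩
    rw [SchubAux, SchubAux, if_neg hw0, if_neg hne', dif_pos h, dif_pos h', hfind]
    congr 1
    exact ih (m-1) (by omega) n (w * simpT (Nat.find h))
      (IsPermOf_mul n (Nat.find h) w hw hspec.1 hspec.2.1) (by omega) g1 g2 (by omega) (by omega)
theorem schubert_stability
    (n : ℕ) (w : Equiv.Perm ℕ) (hw : IsPermOf n w) :
    SchubertIn (n + 1) w = SchubertIn n w := by
  have hle := invCount_le_w0 n w
  have hsq := invCount_le_sq n (w0 n)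
  have hexp : (n+1) * (n+1) = n * n + 2 * n + 1 := by ring
  exact main_stab (invCount n (w0 n) - invCount n w) n w hw (by omega)
    (n * n) ((n+1) * (n+1)) (by omega) (by omega)

end
end
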